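/- Let (Ω, 𝔉, P) be a probability space, Y a square-integrable real-valued random variable, and X_C, X_J random variables with values in measurable spaces (with a standard Borel condition as required for conditional independence). Define the conditional variance given a sub-σ-algebra m as Var(Y | m) := E[(Y − E[Y | m])² | m]. If Y is conditionally independent of X_J given X_C, then E[Var(Y | σ(X_C, X_J))] = E[Var(Y | σ(X_C))]. -/

import Mathlib

set_option maxHeartbeats 1000000
set_option linter.unusedSectionVars false

open MeasureTheory ProbabilityTheory

section AuxDedact

variable {Ω : Type*} [mΩ : MeasurableSpace Ω]
  {P : Measure Ω} [IsProbabilityMeasure P]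
  {EC EJ : Type*} [MeasurableSpace EC] [MeasurableSpace EJ]
  {Y : Ω → ℝ} {XC : Ω → EC} {XJ : Ω → EJ}

/-- Rectangle identity for indicators of `Y`-measurable sets, from the conditional-independence
factorization of conditional probabilities. -/
lemma dedact_aux_indicator
    (hY : Measurable Y) (hXC : Measurable XC) (hXJ : Measurable XJ)
    (hfac : ∀ (s : Set ℝ) (t : Set EJ), MeasurableSet s → MeasurableSet t →
      P[(Y ⁻¹' s ∩ XJ ⁻¹' t).indicator (fun _ => (1 : ℝ)) |
          MeasurableSpace.comap XC inferInstance]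
        =ᵐ[P] fun ω =>
          (P[(Y ⁻¹' s).indicator (fun _ => (1 : ℝ)) | MeasurableSpace.comap XC inferInstance]) ω *
          (P[(XJ ⁻¹' t).indicator (fun _ => (1 : ℝ)) | MeasurableSpace.comap XC inferInstance]) ω)
    {u : Set ℝ} {A : Set EC} {B : Set EJ}
    (hu : MeasurableSet u) (hA : MeasurableSet A) (hB : MeasurableSet B) :
    ∫ x in XC ⁻¹' A ∩ XJ ⁻¹' B,
        (P[(Y ⁻¹' u).indicator (fun _ => (1 : ℝ)) | MeasurableSpace.comap XC inferInstance]) x ∂P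
      = ∫ x in XC ⁻¹' A ∩ XJ ⁻¹' B, (Y ⁻¹' u).indicator (fun _ => (1 : ℝ)) x ∂P := by
  have hm : MeasurableSpace.comap XC inferInstance ≤ mΩ := hXC.comap_le
  haveI : SigmaFinite (P.trim hm) := (isFiniteMeasure_trim hm).toSigmaFinite
  have hCm : MeasurableSet[MeasurableSpace.comap XC inferInstance] (XC ⁻¹' A) := ⟨A, hA, rfl⟩
  have hCΩ : MeasurableSet (XC ⁻¹' A) := hXC hA
  have hJΩ : MeasurableSet (XJ ⁻¹' B) := hXJ hB
  have htΩ : MeasurableSet (Y ⁻¹' u) := hY hu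
  set h : Ω → ℝ :=
    P[(Y ⁻¹' u).indicator (fun _ => (1 : ℝ)) | MeasurableSpace.comap XC inferInstance] with hh_def
  set k : Ω → ℝ :=
    P[(XJ ⁻¹' B).indicator (fun _ => (1 : ℝ)) | MeasurableSpace.comap XC inferInstance] with hk_def
  have hmul : (fun x => h x * (XJ ⁻¹' B).indicator (fun _ => (1 : ℝ)) x)
      = (XJ ⁻¹' B).indicator h := by
    funext x
    by_cases hx : x ∈ XJ ⁻¹' B <;> simp [Set.indicator, hx]
  have h_int_Jh : Integrable ((XJ ⁻¹' B).indicator h) P := integrable_condExp.indicator hJΩ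
  have h_int_mul : Integrable (fun x => h x * (XJ ⁻¹' B).indicator (fun _ => (1 : ℝ)) x) P := by
    rw [hmul]; exact h_int_Jh
  have lhs_eq : ∫ x in XC ⁻¹' A ∩ XJ ⁻¹' B, h x ∂P
      = ∫ x in XC ⁻¹' A, (fun ω => h ω * k ω) x ∂P := by
    calc ∫ x in XC ⁻¹' A ∩ XJ ⁻¹' B, h x ∂P
        = ∫ x in XC ⁻¹' A, (XJ ⁻¹' B).indicator h x ∂P := (setIntegral_indicator hJΩ).symm
      _ = ∫ x in XC ⁻¹' A, (fun x => h x * (XJ ⁻¹' B).indicator (fun _ => (1 : ℝ)) x) x ∂P := by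
          rw [hmul]
      _ = ∫ x in XC ⁻¹' A, (P[fun x => h x * (XJ ⁻¹' B).indicator (fun _ => (1 : ℝ)) x |
            MeasurableSpace.comap XC inferInstance]) x ∂P :=
          (setIntegral_condExp hm h_int_mul hCm).symm
      _ = ∫ x in XC ⁻¹' A, (fun ω => h ω * k ω) x ∂P := by
          refine setIntegral_congr_ae hCΩ ?_
          have hpull := condExp_mul_of_stronglyMeasurable_left
            (stronglyMeasurable_condExp (f := (Y ⁻¹' u).indicator (fun _ => (1 : ℝ)))
              (m := MeasurableSpace.comap XC inferInstance) (μ := P))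
            h_int_mul ((integrable_const (1 : ℝ)).indicator hJΩ)
          filter_upwards [hpull] with x hx _
          exact hx
  have h_int_tJ : Integrable ((Y ⁻¹' u ∩ XJ ⁻¹' B).indicator (fun _ => (1 : ℝ))) P :=
    (integrable_const (1 : ℝ)).indicator (htΩ.inter hJΩ)
  have rhs_eq : ∫ x in XC ⁻¹' A ∩ XJ ⁻¹' B, (Y ⁻¹' u).indicator (fun _ => (1 : ℝ)) x ∂P
      = ∫ x in XC ⁻¹' A, (fun ω => h ω * k ω) x ∂P := by
    have e1 : ∫ x in XC ⁻¹' A ∩ XJ ⁻¹' B, (Y ⁻¹' u).indicator (fun _ => (1 : ℝ)) x ∂P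
        = (P ((XC ⁻¹' A ∩ XJ ⁻¹' B) ∩ Y ⁻¹' u)).toReal := by
      rw [setIntegral_indicator htΩ, setIntegral_const, smul_eq_mul, mul_one, measureReal_def]
    have e2 : ∫ x in XC ⁻¹' A, (Y ⁻¹' u ∩ XJ ⁻¹' B).indicator (fun _ => (1 : ℝ)) x ∂P
        = (P (XC ⁻¹' A ∩ (Y ⁻¹' u ∩ XJ ⁻¹' B))).toReal := by
      rw [setIntegral_indicator (htΩ.inter hJΩ), setIntegral_const, smul_eq_mul, mul_one, measureReal_def]
    have hset : (XC ⁻¹' A ∩ XJ ⁻¹' B) ∩ Y ⁻¹' u = XC ⁻¹' A ∩ (Y ⁻¹' u ∩ XJ ⁻¹' B) := by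
      ext x; simp only [Set.mem_inter_iff]; tauto
    calc ∫ x in XC ⁻¹' A ∩ XJ ⁻¹' B, (Y ⁻¹' u).indicator (fun _ => (1 : ℝ)) x ∂P
        = ∫ x in XC ⁻¹' A, (Y ⁻¹' u ∩ XJ ⁻¹' B).indicator (fun _ => (1 : ℝ)) x ∂P := by
          rw [e1, e2, hset]
      _ = ∫ x in XC ⁻¹' A, (P[(Y ⁻¹' u ∩ XJ ⁻¹' B).indicator (fun _ => (1 : ℝ)) |
            MeasurableSpace.comap XC inferInstance]) x ∂P :=
          (setIntegral_condExp hm h_int_tJ hCm).symm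
      _ = ∫ x in XC ⁻¹' A, (fun ω => h ω * k ω) x ∂P := by
          refine setIntegral_congr_ae hCΩ ?_
          filter_upwards [hfac u B hu hB] with x hx _
          exact hx
  rw [lhs_eq, rhs_eq]

/-- Rectangle identity for a general integrable `Y`. -/
lemma dedact_aux_rect
    (hY : Measurable Y) (hYi : Integrable Y P)
    (hXC : Measurable XC) (hXJ : Measurable XJ)
    (hfac : ∀ (s : Set ℝ) (t : Set EJ), MeasurableSet s → MeasurableSet t →
      P[(Y ⁻¹' s ∩ XJ ⁻¹' t).indicator (fun _ => (1 : ℝ)) |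
          MeasurableSpace.comap XC inferInstance]
        =ᵐ[P] fun ω =>
          (P[(Y ⁻¹' s).indicator (fun _ => (1 : ℝ)) | MeasurableSpace.comap XC inferInstance]) ω *
          (P[(XJ ⁻¹' t).indicator (fun _ => (1 : ℝ)) | MeasurableSpace.comap XC inferInstance]) ω)
    {A : Set EC} {B : Set EJ} (hA : MeasurableSet A) (hB : MeasurableSet B) :
    ∫ x in XC ⁻¹' A ∩ XJ ⁻¹' B, (P[Y | MeasurableSpace.comap XC inferInstance]) x ∂P
      = ∫ x in XC ⁻¹' A ∩ XJ ⁻¹' B, Y x ∂P := by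
  have hm : MeasurableSpace.comap XC inferInstance ≤ mΩ := hXC.comap_le
  haveI : SigmaFinite (P.trim hm) := (isFiniteMeasure_trim hm).toSigmaFinite
  have hmY : MeasurableSpace.comap Y inferInstance ≤ mΩ := hY.comap_le
  have hs'Ω : MeasurableSet (XC ⁻¹' A ∩ XJ ⁻¹' B) := (hXC hA).inter (hXJ hB)
  have hQ : ∀ ⦃f : Ω → ℝ⦄, MemLp f 1 P →
      AEStronglyMeasurable[MeasurableSpace.comap Y inferInstance] f P →
      (∫ x in XC ⁻¹' A ∩ XJ ⁻¹' B, (P[f | MeasurableSpace.comap XC inferInstance]) x ∂P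
        = ∫ x in XC ⁻¹' A ∩ XJ ⁻¹' B, f x ∂P) := by
    refine MemLp.induction_stronglyMeasurable hmY ENNReal.one_ne_top
      (fun f => ∫ x in XC ⁻¹' A ∩ XJ ⁻¹' B,
          (P[f | MeasurableSpace.comap XC inferInstance]) x ∂P
        = ∫ x in XC ⁻¹' A ∩ XJ ⁻¹' B, f x ∂P) ?_ ?_ ?_ ?_
    · -- indicators
      rintro c s ⟨u, hu, rfl⟩ -
      have hsmul : (Y ⁻¹' u).indicator (fun _ => c)
          = c • (Y ⁻¹' u).indicator (fun _ => (1 : ℝ)) := by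
        funext x
        by_cases hx : x ∈ Y ⁻¹' u <;> simp [Set.indicator, hx]
      rw [hsmul]
      have hcond := condExp_smul (m := MeasurableSpace.comap XC inferInstance) (μ := P) c
        ((Y ⁻¹' u).indicator (fun _ => (1 : ℝ)))
      calc ∫ x in XC ⁻¹' A ∩ XJ ⁻¹' B, (P[c • (Y ⁻¹' u).indicator (fun _ => (1 : ℝ)) |
            MeasurableSpace.comap XC inferInstance]) x ∂P
          = ∫ x in XC ⁻¹' A ∩ XJ ⁻¹' B, (c • (P[(Y ⁻¹' u).indicator (fun _ => (1 : ℝ)) |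
              MeasurableSpace.comap XC inferInstance])) x ∂P := by
            refine setIntegral_congr_ae hs'Ω ?_
            filter_upwards [hcond] with x hx _ using hx
        _ = c * ∫ x in XC ⁻¹' A ∩ XJ ⁻¹' B, (P[(Y ⁻¹' u).indicator (fun _ => (1 : ℝ)) |
              MeasurableSpace.comap XC inferInstance]) x ∂P := by
            simp only [Pi.smul_apply]
            rw [integral_smul, smul_eq_mul]
        _ = c * ∫ x in XC ⁻¹' A ∩ XJ ⁻¹' B, (Y ⁻¹' u).indicator (fun _ => (1 : ℝ)) x ∂P := by
            rw [dedact_aux_indicator hY hXC hXJ hfac hu hA hB]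
        _ = ∫ x in XC ⁻¹' A ∩ XJ ⁻¹' B, (c • (Y ⁻¹' u).indicator (fun _ => (1 : ℝ))) x ∂P := by
            simp only [Pi.smul_apply]
            rw [integral_smul, smul_eq_mul]
    · -- additivity
      intro f g _ hf hg _ _ hQf hQg
      have hfi : Integrable f P := memLp_one_iff_integrable.mp hf
      have hgi : Integrable g P := memLp_one_iff_integrable.mp hg
      calc ∫ x in XC ⁻¹' A ∩ XJ ⁻¹' B, (P[f + g |
            MeasurableSpace.comap XC inferInstance]) x ∂P
          = ∫ x in XC ⁻¹' A ∩ XJ ⁻¹' B, ((P[f | MeasurableSpace.comap XC inferInstance])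
              + (P[g | MeasurableSpace.comap XC inferInstance])) x ∂P := by
            refine setIntegral_congr_ae hs'Ω ?_
            filter_upwards [condExp_add hfi hgi _] with x hx _ using hx
        _ = (∫ x in XC ⁻¹' A ∩ XJ ⁻¹' B, (P[f | MeasurableSpace.comap XC inferInstance]) x ∂P)
            + ∫ x in XC ⁻¹' A ∩ XJ ⁻¹' B, (P[g | MeasurableSpace.comap XC inferInstance]) x ∂P :=
            integral_add integrable_condExp.integrableOn integrable_condExp.integrableOn
        _ = (∫ x in XC ⁻¹' A ∩ XJ ⁻¹' B, f x ∂P) + ∫ x in XC ⁻¹' A ∩ XJ ⁻¹' B, g x ∂P := by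
            rw [hQf, hQg]
        _ = ∫ x in XC ⁻¹' A ∩ XJ ⁻¹' B, (f + g) x ∂P :=
            (integral_add hfi.integrableOn hgi.integrableOn).symm
    · -- closedness
      have hset : {f : lpMeas ℝ ℝ (MeasurableSpace.comap Y inferInstance) 1 P |
            ∫ x in XC ⁻¹' A ∩ XJ ⁻¹' B,
              (P[(f : Ω → ℝ) | MeasurableSpace.comap XC inferInstance]) x ∂P
            = ∫ x in XC ⁻¹' A ∩ XJ ⁻¹' B, (f : Ω → ℝ) x ∂P}
          = {f : lpMeas ℝ ℝ (MeasurableSpace.comap Y inferInstance) 1 P |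
            (fun g : Lp ℝ 1 P => ∫ x in XC ⁻¹' A ∩ XJ ⁻¹' B,
              (condExpL1CLM ℝ hm P g) x ∂P) ↑f
            = (fun g : Lp ℝ 1 P => ∫ x in XC ⁻¹' A ∩ XJ ⁻¹' B, g x ∂P) ↑f} := by
        ext f
        simp only [Set.mem_setOf_eq]
        have hfi : Integrable (f : Ω → ℝ) P := L1.integrable_coeFn _
        have h1 : ∫ x in XC ⁻¹' A ∩ XJ ⁻¹' B,
              (P[(f : Ω → ℝ) | MeasurableSpace.comap XC inferInstance]) x ∂P
            = ∫ x in XC ⁻¹' A ∩ XJ ⁻¹' B, (condExpL1CLM ℝ hm P ↑f) x ∂P := by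
          refine setIntegral_congr_ae hs'Ω ?_
          have h2 := condExp_ae_eq_condExpL1CLM hm hfi
          rw [hfi.toL1_coeFn] at h2
          filter_upwards [h2] with x hx _ using hx
        rw [h1]
      rw [hset]
      refine isClosed_eq ?_ ?_
      · exact ((continuous_setIntegral (XC ⁻¹' A ∩ XJ ⁻¹' B)).comp
          (condExpL1CLM ℝ hm P).continuous).comp
          (ContinuousLinearMap.continuous (Submodule.subtypeL _))
      · exact (continuous_setIntegral (XC ⁻¹' A ∩ XJ ⁻¹' B)).comp
          (ContinuousLinearMap.continuous (Submodule.subtypeL _))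
    · -- ae congruence
      intro f g hfg hf hQf
      calc ∫ x in XC ⁻¹' A ∩ XJ ⁻¹' B, (P[g | MeasurableSpace.comap XC inferInstance]) x ∂P
          = ∫ x in XC ⁻¹' A ∩ XJ ⁻¹' B, (P[f | MeasurableSpace.comap XC inferInstance]) x ∂P := by
            refine setIntegral_congr_ae hs'Ω ?_
            filter_upwards [condExp_congr_ae hfg.symm] with x hx _ using hx
        _ = ∫ x in XC ⁻¹' A ∩ XJ ⁻¹' B, f x ∂P := hQf
        _ = ∫ x in XC ⁻¹' A ∩ XJ ⁻¹' B, g x ∂P := by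
            refine setIntegral_congr_ae hs'Ω ?_
            filter_upwards [hfg] with x hx _ using hx
  refine hQ (memLp_one_iff_integrable.mpr hYi) ?_
  exact StronglyMeasurable.aestronglyMeasurable
    (Measurable.stronglyMeasurable (measurable_iff_comap_le.mpr le_rfl))

/-- The σ-algebra generated by the pair `(XC, XJ)` is generated by rectangles. -/
lemma dedact_aux_generateFrom :
    MeasurableSpace.comap (fun ω => (XC ω, XJ ω)) inferInstance
      = MeasurableSpace.generateFrom
        {s : Set Ω | ∃ A B, MeasurableSet A ∧ MeasurableSet B ∧ s = XC ⁻¹' A ∩ XJ ⁻¹' B} := by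
  conv_lhs => rw [show (inferInstance : MeasurableSpace (EC × EJ))
      = MeasurableSpace.generateFrom (Set.image2 (· ×ˢ ·)
        {s : Set EC | MeasurableSet s} {t : Set EJ | MeasurableSet t}) from
      generateFrom_prod.symm]
  rw [MeasurableSpace.comap_generateFrom]
  congr 1
  ext s
  constructor
  · rintro ⟨r, ⟨A, hA, B, hB, rfl⟩, rfl⟩
    exact ⟨A, B, hA, hB, by rw [Set.mk_preimage_prod]⟩
  · rintro ⟨A, B, hA, hB, rfl⟩
    exact ⟨A ×ˢ B, ⟨A, hA, B, hB, rfl⟩, by rw [Set.mk_preimage_prod]⟩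

/-- Under conditional independence `Y ⊥ XJ | XC`, enlarging the conditioning σ-algebra from
`σ(XC)` to `σ(XC, XJ)` does not change the conditional expectation of `Y`. -/
lemma dedact_condexp_pair_eq [StandardBorelSpace Ω]
    (hY : Measurable Y) (hYi : Integrable Y P)
    (hXC : Measurable XC) (hXJ : Measurable XJ)
    (hYJ : CondIndepFun (MeasurableSpace.comap XC inferInstance) hXC.comap_le Y XJ P) :
    P[Y | MeasurableSpace.comap (fun ω => (XC ω, XJ ω)) inferInstance]
      =ᵐ[P] P[Y | MeasurableSpace.comap XC inferInstance] := by
  have hm : MeasurableSpace.comap XC inferInstance ≤ mΩ := hXC.comap_le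
  have hm₂ : MeasurableSpace.comap (fun ω => (XC ω, XJ ω)) inferInstance ≤ mΩ :=
    (hXC.prodMk hXJ).comap_le
  haveI : SigmaFinite (P.trim hm) := (isFiniteMeasure_trim hm).toSigmaFinite
  haveI : SigmaFinite (P.trim hm₂) := (isFiniteMeasure_trim hm₂).toSigmaFinite
  have hle : MeasurableSpace.comap XC inferInstance
      ≤ MeasurableSpace.comap (fun ω => (XC ω, XJ ω)) inferInstance := by
    rintro s ⟨A, hA, rfl⟩
    exact ⟨A ×ˢ Set.univ, hA.prod MeasurableSet.univ, by ext ω; simp⟩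
  rw [condIndepFun_iff_condExp_inter_preimage_eq_mul hY hXJ] at hYJ
  have hpi : IsPiSystem
      {s : Set Ω | ∃ A B, MeasurableSet A ∧ MeasurableSet B ∧ s = XC ⁻¹' A ∩ XJ ⁻¹' B} := by
    rintro s ⟨A₁, B₁, hA₁, hB₁, rfl⟩ t ⟨A₂, B₂, hA₂, hB₂, rfl⟩ -
    refine ⟨A₁ ∩ A₂, B₁ ∩ B₂, hA₁.inter hA₂, hB₁.inter hB₂, ?_⟩
    ext x
    simp only [Set.mem_inter_iff, Set.mem_preimage]
    tauto
  have key : ∀ s,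
      MeasurableSet[MeasurableSpace.comap (fun ω => (XC ω, XJ ω)) inferInstance] s →
      ∫ x in s, (P[Y | MeasurableSpace.comap XC inferInstance]) x ∂P = ∫ x in s, Y x ∂P := by
    refine @MeasurableSpace.induction_on_inter Ω
      (MeasurableSpace.comap (fun ω => (XC ω, XJ ω)) inferInstance)
      (fun s _ => ∫ x in s, (P[Y | MeasurableSpace.comap XC inferInstance]) x ∂P
        = ∫ x in s, Y x ∂P) _
      dedact_aux_generateFrom hpi ?_ ?_ ?_ ?_
    · simp
    · rintro s ⟨A, B, hA, hB, rfl⟩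
      exact dedact_aux_rect hY hYi hXC hXJ hYJ hA hB
    · intro s hsm hs
      have hsΩ : MeasurableSet s := hm₂ s hsm
      have h1 : (∫ x in s, (P[Y | MeasurableSpace.comap XC inferInstance]) x ∂P)
          + ∫ x in sᶜ, (P[Y | MeasurableSpace.comap XC inferInstance]) x ∂P
          = ∫ x, (P[Y | MeasurableSpace.comap XC inferInstance]) x ∂P :=
        integral_add_compl hsΩ integrable_condExp
      have h2 : (∫ x in s, Y x ∂P) + ∫ x in sᶜ, Y x ∂P = ∫ x, Y x ∂P :=
        integral_add_compl hsΩ hYi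
      have h3 : ∫ x, (P[Y | MeasurableSpace.comap XC inferInstance]) x ∂P = ∫ x, Y x ∂P :=
        integral_condExp hm
      linarith
    · intro f hdisj hfm hC
      have h1 := hasSum_integral_iUnion (μ := P) (fun i => hm₂ _ (hfm i)) hdisj
        (integrable_condExp (f := Y)
          (m := MeasurableSpace.comap XC inferInstance)).integrableOn
      have h2 := hasSum_integral_iUnion (μ := P) (fun i => hm₂ _ (hfm i)) hdisj
        hYi.integrableOn
      have hfun : (fun n => ∫ x in f n,
            (P[Y | MeasurableSpace.comap XC inferInstance]) x ∂P)
          = fun n => ∫ x in f n, Y x ∂P := funext hC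
      rw [hfun] at h1
      exact h1.unique h2
  refine (ae_eq_condExp_of_forall_setIntegral_eq hm₂ hYi
    (fun s _ _ => integrable_condExp.integrableOn)
    (fun s hs _ => key s hs) ?_).symm
  exact StronglyMeasurable.aestronglyMeasurable (stronglyMeasurable_condExp.mono hle)

end AuxDedact

/-- Expected-conditional-variance identity under conditional independence: if `Y ⫫ X_J | X_C`,
then `E[Var(Y | σ(X_C, X_J))] = E[Var(Y | σ(X_C))]`, where
`Var(Y | m) := E[(Y − E[Y | m])² | m]`. -/
theorem dedact_expected_conditional_variance
    {Ω : Type*} [MeasurableSpace Ω] [StandardBorelSpace Ω] [Nonempty Ω]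
    (P : Measure Ω) [IsProbabilityMeasure P]
    {EC EJ : Type*} [MeasurableSpace EC] [MeasurableSpace EJ]
    (Y : Ω → ℝ) (XC : Ω → EC) (XJ : Ω → EJ)
    (hY : Measurable Y) (hY2 : MemLp Y 2 P)
    (hXC : Measurable XC) (hXJ : Measurable XJ)
    (hYJ : CondIndepFun (MeasurableSpace.comap XC inferInstance) hXC.comap_le Y XJ P) :
    (∫ ω, (P[fun ω' =>
        (Y ω' - (P[Y | MeasurableSpace.comap (fun ω'' => (XC ω'', XJ ω'')) inferInstance]) ω') ^ 2
      | MeasurableSpace.comap (fun ω'' => (XC ω'', XJ ω'')) inferInstance]) ω ∂P)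
    = ∫ ω, (P[fun ω' =>
        (Y ω' - (P[Y | MeasurableSpace.comap XC inferInstance]) ω') ^ 2
      | MeasurableSpace.comap XC inferInstance]) ω ∂P := by
  have hm : MeasurableSpace.comap XC inferInstance ≤ ‹MeasurableSpace Ω› := hXC.comap_le
  have hm₂ : MeasurableSpace.comap (fun ω'' => (XC ω'', XJ ω'')) inferInstance
      ≤ ‹MeasurableSpace Ω› := (hXC.prodMk hXJ).comap_le
  haveI : SigmaFinite (P.trim hm) := (isFiniteMeasure_trim hm).toSigmaFinite
  haveI : SigmaFinite (P.trim hm₂) := (isFiniteMeasure_trim hm₂).toSigmaFinite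
  have hYi : Integrable Y P := hY2.integrable one_le_two
  have heq := dedact_condexp_pair_eq hY hYi hXC hXJ hYJ
  rw [integral_condExp hm₂, integral_condExp hm]
  refine integral_congr_ae ?_
  filter_upwards [heq] with ω hω
  rw [hω]
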